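/- The Riemann theta function satisfies the quasi-periodicity law θ(τ, z + n + τm) = exp(−πi mᵀτm − 2πi mᵀz) · θ(τ, z) for all m, n ∈ ℤ^g, τ ∈ H_g, z ∈ ℂ^g. -/
import Mathlib


open Matrix Complex

noncomputable section

def SiegelUpperHalfSpace (g : ℕ) : Set (Matrix (Fin g) (Fin g) ℂ) :=
  {τ | τ.IsSymm ∧ (Matrix.of fun i j => (τ i j).im).PosDef}

/-- The Riemann theta function `θ(τ,z) = Σ_{k ∈ ℤ^g} exp(πi kᵀτk + 2πi kᵀz)`. -/
def riemannTheta {g : ℕ} (τ : Matrix (Fin g) (Fin g) ℂ) (z : Fin g → ℂ) : ℂ :=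
  ∑' k : Fin g → ℤ,
    Complex.exp (Real.pi * Complex.I * (∑ i, ∑ j, (k i : ℂ) * τ i j * (k j : ℂ))
      + 2 * Real.pi * Complex.I * ∑ i, (k i : ℂ) * z i)

/-- Quasi-periodicity of the Riemann theta function:
`θ(τ, z + n + τm) = exp(−πi mᵀτm − 2πi mᵀz) · θ(τ, z)` for `m, n ∈ ℤ^g`. -/
theorem riemannTheta_quasi_periodic {g : ℕ}
    (τ : Matrix (Fin g) (Fin g) ℂ) (hτ : τ ∈ SiegelUpperHalfSpace g)
    (z : Fin g → ℂ) (m n : Fin g → ℤ) :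
    riemannTheta τ (z + (fun i => (n i : ℂ)) + τ.mulVec (fun i => (m i : ℂ))) =
      Complex.exp (-(Real.pi * Complex.I *
          (∑ i, ∑ j, (m i : ℂ) * τ i j * (m j : ℂ)))
        - 2 * Real.pi * Complex.I * ∑ i, (m i : ℂ) * z i) *
      riemannTheta τ z := by
  obtain ⟨hsym, -⟩ := hτ
  have hs : ∀ i j, τ j i = τ i j := fun i j => (hsym.apply j i).symm
  unfold riemannTheta
  conv_rhs => rw [← (Equiv.addRight m).tsum_eq, ← tsum_mul_left]
  refine tsum_congr fun k => ?_
  simp only [Equiv.coe_addRight, Pi.add_apply]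
  rw [← Complex.exp_add, Complex.exp_eq_exp_iff_exists_int]
  refine ⟨∑ i, k i * n i, ?_⟩
  have h1 : ∑ i, (k i : ℂ) * (z i + (n i : ℂ) + τ.mulVec (fun i => (m i : ℂ)) i)
      = (∑ i, (k i : ℂ) * z i) + (∑ i, (k i : ℂ) * (n i : ℂ))
        + ∑ i, ∑ j, (k i : ℂ) * τ i j * (m j : ℂ) := by
    simp only [Matrix.mulVec, dotProduct, mul_add, Finset.sum_add_distrib,
      Finset.mul_sum, mul_assoc]
  have h2 : ∑ i, ∑ j, ((k i : ℂ) + (m i : ℂ)) * τ i j * ((k j : ℂ) + (m j : ℂ))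
      = (∑ i, ∑ j, (k i : ℂ) * τ i j * (k j : ℂ))
        + 2 * (∑ i, ∑ j, (k i : ℂ) * τ i j * (m j : ℂ))
        + ∑ i, ∑ j, (m i : ℂ) * τ i j * (m j : ℂ) := by
    have hmk : ∑ i, ∑ j, (m i : ℂ) * τ i j * (k j : ℂ)
        = ∑ i, ∑ j, (k i : ℂ) * τ i j * (m j : ℂ) := by
      rw [Finset.sum_comm]
      exact Finset.sum_congr rfl fun i _ => Finset.sum_congr rfl fun j _ => by
        rw [hs]; ring
    calc ∑ i, ∑ j, ((k i : ℂ) + (m i : ℂ)) * τ i j * ((k j : ℂ) + (m j : ℂ))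
        = ∑ i, ∑ j, ((k i : ℂ) * τ i j * (k j : ℂ) + (k i : ℂ) * τ i j * (m j : ℂ)
            + ((m i : ℂ) * τ i j * (k j : ℂ) + (m i : ℂ) * τ i j * (m j : ℂ))) :=
          Finset.sum_congr rfl fun i _ => Finset.sum_congr rfl fun j _ => by ring
      _ = _ := by
          simp only [Finset.sum_add_distrib, hmk]; ring
  have h3 : ∑ i, ((k i : ℂ) + (m i : ℂ)) * z i
      = (∑ i, (k i : ℂ) * z i) + ∑ i, (m i : ℂ) * z i := by
    simp [add_mul, Finset.sum_add_distrib]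
  push_cast
  rw [h1, h2, h3]
  ring
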